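/- arXiv:2405.01700 — 2 statements merged into one kernel-verified Lean document; each statement's English description precedes it below -/
import Mathlib

section
/- Let S be a numerical semigroup of multiplicity m with semigroup ring R over a field k. The infinite Apéry resolution F_• of k over R is minimal, i.e., ∂(F_d) ⊆ 𝔪·F_{d−1} for every d ≥ 1, if and only if S has maximal embedding dimension. (Theorem 3.2, second assertion.) -/
open Polynomial CategoryTheory

set_option synthInstance.maxHeartbeats 1000000
set_option maxHeartbeats 1600000


/-- A numerical semigroup: a cofinite additive submonoid of `ℕ`. -/
structure NumericalSemigroup where
  carrier : AddSubmonoid ℕ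
  cofinite : ((carrier : Set ℕ))ᶜ.Finite

namespace NumericalSemigroup

/-- The multiplicity `m = min (S \ {0})`. -/
noncomputable def mult (S : NumericalSemigroup) : ℕ :=
  sInf {n | n ∈ S.carrier ∧ n ≠ 0}

/-- `apery S i` is the smallest element of `S` congruent to `i` mod `m`. -/
noncomputable def apery (S : NumericalSemigroup) (i : ℕ) : ℕ :=
  sInf {n | n ∈ S.carrier ∧ n % S.mult = i % S.mult}

lemma exists_bound (S : NumericalSemigroup) : ∃ N, ∀ n, N ≤ n → n ∈ S.carrier := by
  obtain ⟨C, hC⟩ := S.cofinite.bddAbove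
  refine ⟨C + 1, fun n hn => ?_⟩
  by_contra h
  exact absurd (hC h) (by omega)

lemma mult_spec (S : NumericalSemigroup) : S.mult ∈ S.carrier ∧ S.mult ≠ 0 := by
  obtain ⟨N, hN⟩ := S.exists_bound
  have h : {n | n ∈ S.carrier ∧ n ≠ 0}.Nonempty := ⟨N + 1, hN _ (by omega), by omega⟩
  exact Nat.sInf_mem h

lemma apery_spec (S : NumericalSemigroup) (i : ℕ) :
    S.apery i ∈ S.carrier ∧ S.apery i % S.mult = i % S.mult := by
  obtain ⟨N, hN⟩ := S.exists_bound
  have hm : S.mult ≠ 0 := S.mult_spec.2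
  have h : {n | n ∈ S.carrier ∧ n % S.mult = i % S.mult}.Nonempty := by
    refine ⟨i % S.mult + S.mult * (N + 1), hN _ ?_, ?_⟩
    · have h1 : 1 ≤ S.mult := Nat.one_le_iff_ne_zero.mpr hm
      have : N + 1 ≤ S.mult * (N + 1) := Nat.le_mul_of_pos_left _ h1
      omega
    · simp [Nat.add_mul_mod_self_left, Nat.mod_mod_of_dvd]
  exact Nat.sInf_mem h

/-- The Apéry numbers `a_i` for `i ∈ ℤ/m`, with the convention `a_0 = m`. -/
noncomputable def a (S : NumericalSemigroup) (i : ZMod S.mult) : ℕ :=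
  if i = 0 then S.mult else S.apery i.val

lemma a_mem (S : NumericalSemigroup) (i : ZMod S.mult) : S.a i ∈ S.carrier := by
  unfold a; split
  · exact S.mult_spec.1
  · exact (S.apery_spec _).1

/-- The quantities `b_{ij} = (a_i + a_j - a_{i+j})/m`. -/
noncomputable def b (S : NumericalSemigroup) (i j : ZMod S.mult) : ℕ :=
  (S.a i + S.a j - S.a (i + j)) / S.mult

/-- The semigroup algebra `k[S]`, realized as the subalgebra of `k[t]`
spanned by the monomials `t^s` with `s ∈ S`. -/
def toRing (k : Type) [Field k] (S : NumericalSemigroup) : Subalgebra k (Polynomial k) where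
  carrier := {p | ∀ n, p.coeff n ≠ 0 → n ∈ S.carrier}
  add_mem' := by
    intro p q hp hq n h
    rw [Set.mem_setOf_eq] at hp hq
    by_contra hn
    have h1 : (p : Polynomial k).coeff n = 0 := by by_contra hc; exact hn (hp n hc)
    have h2 : (q : Polynomial k).coeff n = 0 := by by_contra hc; exact hn (hq n hc)
    simp [coeff_add, h1, h2] at h
  mul_mem' := by
    intro p q hp hq n h
    rw [Set.mem_setOf_eq] at hp hq
    rw [Polynomial.coeff_mul] at h
    obtain ⟨⟨u, v⟩, huv, hne⟩ := Finset.exists_ne_zero_of_sum_ne_zero h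
    obtain ⟨h1, h2⟩ := mul_ne_zero_iff.mp hne
    have : u + v = n := Finset.HasAntidiagonal.mem_antidiagonal.mp huv
    exact this ▸ S.carrier.add_mem (hp u h1) (hq v h2)
  algebraMap_mem' := by
    intro r n h
    have : n = 0 := by
      by_contra hn
      simp [Polynomial.coeff_C, hn] at h
    exact this ▸ S.carrier.zero_mem

variable (k : Type) [Field k] (S : NumericalSemigroup)

/-- The monomial `x_j = t^{a_j}` as an element of `k[S]`. -/
noncomputable def xv (j : ZMod S.mult) : S.toRing k :=
  ⟨X ^ S.a j, by
    intro n h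
    have : n = S.a j := by
      by_contra hn
      simp [coeff_X_pow, hn] at h
    exact this ▸ S.a_mem j⟩

/-- The augmentation `k[S] → k = k[S]/𝔪`, given by the constant coefficient. -/
noncomputable def aug : S.toRing k →+* k :=
  (Polynomial.constantCoeff).comp ((S.toRing k).val.toRingHom)

/-- The maximal ideal `𝔪` of `k[S]`. -/
noncomputable def mIdeal : Ideal (S.toRing k) :=
  RingHom.ker (S.aug k)

/-- The residue field `k = k[S]/𝔪` as a module over `k[S]`. -/
def ResMod (_S : NumericalSemigroup) : Type := k

noncomputable instance : AddCommGroup (ResMod k S) := inferInstanceAs (AddCommGroup k)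
noncomputable instance : Module (S.toRing k) (ResMod k S) := Module.compHom k (S.aug k)

/-- `dim_k Tor_i^{k[S]}(k, k)` as a cardinal. -/
noncomputable def torDim (i : ℕ) : Cardinal :=
  Module.rank k (RestrictScalars k (S.toRing k)
    (((Tor (ModuleCat (S.toRing k)) i).obj
        (ModuleCat.of (S.toRing k) (ResMod k S))).obj
      (ModuleCat.of (S.toRing k) (ResMod k S))))


/-- Words `w ∈ (ℤ/m)^d` indexing the generators of `F_d`; since `e_w = 0` whenever some
letter past the first is `0`, the basis consists of words whose letters past the first
are all nonzero. -/
def Word (m d : ℕ) : Type := {w : Fin d → ZMod m // ∀ i : Fin d, 0 < (i : ℕ) → w i ≠ 0}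

/-- Remove the last letter of a word: `ŵ`. -/
def trunc {m d : ℕ} (w : Fin (d + 1) → ZMod m) (i : Fin d) : ZMod m := w i.castSucc

/-- `tau i` merges the letters in (0-indexed) positions `i` and `i+1`. -/
def tau {m d : ℕ} (i : Fin d) (w : Fin (d + 1) → ZMod m) (j : Fin d) : ZMod m :=
  if (j : ℕ) < (i : ℕ) then w j.castSucc
  else if j = i then w i.castSucc + w i.succ
  else w j.succ

/-- The basis vector `e_v` of `F_d`, interpreted as `0` if `v` has a zero letter past
the first position. -/
noncomputable def E {d : ℕ} (v : Fin d → ZMod S.mult) : Word S.mult d →₀ S.toRing k :=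
  if h : ∀ i : Fin d, 0 < (i : ℕ) → v i ≠ 0 then Finsupp.single ⟨v, h⟩ 1 else 0

/-- The differential `∂ : F_{d+1} → F_d` of the infinite Apéry complex:
`∂ e_w = x_{w_d} e_{ŵ} + Σ_{i} (-1)^{d-i} y^{b_{w_i w_{i+1}}} e_{τ_i w}`. -/
noncomputable def del (d : ℕ) :
    (Word S.mult (d + 1) →₀ S.toRing k) →ₗ[S.toRing k] (Word S.mult d →₀ S.toRing k) :=
  Finsupp.lift (Word S.mult d →₀ S.toRing k) (S.toRing k) (Word S.mult (d + 1)) fun w =>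
    S.xv k (w.1 (Fin.last d)) • E k S (trunc w.1)
      + ∑ i : Fin d,
          ((-1 : S.toRing k) ^ (d - (i : ℕ)) *
              S.xv k 0 ^ S.b (w.1 i.castSucc) (w.1 i.succ)) •
            E k S (tau i w.1)

/-- The set of minimal generators of `S`: nonzero elements of `S` that are not sums of
two nonzero elements of `S`. -/
def minimalGenerators (T : NumericalSemigroup) : Set ℕ :=
  {n | n ∈ T.carrier ∧ n ≠ 0 ∧
    ¬∃ u ∈ T.carrier, ∃ v ∈ T.carrier, u ≠ 0 ∧ v ≠ 0 ∧ u + v = n}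

/-- `S` has maximal embedding dimension: the number of minimal generators equals the
multiplicity. -/
def IsMED (T : NumericalSemigroup) : Prop :=
  T.minimalGenerators.ncard = T.mult


section Aux

variable (T : NumericalSemigroup)

lemma mult_ne_zero : T.mult ≠ 0 := T.mult_spec.2

lemma mult_mem : T.mult ∈ T.carrier := T.mult_spec.1

lemma mult_le_mem {n : ℕ} (hn : n ∈ T.carrier) (h0 : n ≠ 0) : T.mult ≤ n :=
  Nat.sInf_le ⟨hn, h0⟩

lemma a_mod (i : ZMod T.mult) : T.a i % T.mult = i.val := by
  haveI : NeZero T.mult := ⟨T.mult_ne_zero⟩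
  unfold a
  split
  · subst ‹i = 0›
    simp [Nat.mod_self]
  · rw [(T.apery_spec i.val).2, Nat.mod_eq_of_lt (ZMod.val_lt i)]

lemma a_ne_zero (i : ZMod T.mult) : T.a i ≠ 0 := by
  haveI : NeZero T.mult := ⟨T.mult_ne_zero⟩
  by_cases hi : i = 0
  · subst hi; unfold a; simp [T.mult_ne_zero]
  · intro h
    have h2 := T.a_mod i
    rw [h] at h2
    simp only [Nat.zero_mod] at h2
    exact hi ((ZMod.val_eq_zero i).mp h2.symm)

lemma mult_le_a (i : ZMod T.mult) : T.mult ≤ T.a i :=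
  T.mult_le_mem (T.a_mem i) (T.a_ne_zero i)

lemma a_le {i : ZMod T.mult} {n : ℕ} (hn : n ∈ T.carrier) (h0 : n ≠ 0)
    (hmod : n % T.mult = i.val) : T.a i ≤ n := by
  haveI : NeZero T.mult := ⟨T.mult_ne_zero⟩
  by_cases hi : i = 0
  · subst hi
    unfold a; simp only [if_pos rfl]
    exact T.mult_le_mem hn h0
  · unfold a
    rw [if_neg hi]
    exact Nat.sInf_le ⟨hn, by rw [hmod, Nat.mod_eq_of_lt (ZMod.val_lt i)]⟩

lemma mul_mult_mem (t : ℕ) : t * T.mult ∈ T.carrier := by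
  induction t with
  | zero => simpa using T.carrier.zero_mem
  | succ n ih => rw [Nat.succ_mul]; exact T.carrier.add_mem ih T.mult_mem

lemma a_add_mod (i j : ZMod T.mult) :
    (T.a i + T.a j) % T.mult = (i + j).val := by
  haveI : NeZero T.mult := ⟨T.mult_ne_zero⟩
  rw [Nat.add_mod, T.a_mod, T.a_mod, ZMod.val_add]

lemma a_add_le (i j : ZMod T.mult) : T.a (i + j) ≤ T.a i + T.a j :=
  T.a_le (T.carrier.add_mem (T.a_mem i) (T.a_mem j))
    (by have := T.a_ne_zero i; omega) (T.a_add_mod i j)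

lemma mult_dvd_sub (i j : ZMod T.mult) :
    T.mult ∣ T.a i + T.a j - T.a (i + j) := by
  have h1 := T.a_add_mod i j
  have h2 := T.a_mod (i + j)
  have h3 := T.a_add_le i j
  have h4 : (T.a i + T.a j) % T.mult = T.a (i + j) % T.mult := by rw [h1, h2]
  exact Nat.dvd_of_mod_eq_zero (Nat.sub_mod_eq_zero_of_mod_eq h4)

lemma b_eq_zero_iff (i j : ZMod T.mult) :
    T.b i j = 0 ↔ T.a i + T.a j = T.a (i + j) := by
  obtain ⟨c, hc⟩ := T.mult_dvd_sub i j
  have h3 := T.a_add_le i j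
  have hm := T.mult_ne_zero
  unfold b
  rw [hc, Nat.mul_div_cancel_left c (Nat.pos_of_ne_zero hm)]
  constructor
  · rintro rfl
    rw [Nat.mul_zero] at hc
    omega
  · intro h
    have h0 : T.mult * c = 0 := by rw [← hc]; omega
    rcases Nat.mul_eq_zero.mp h0 with h1 | h1
    · exact absurd h1 hm
    · exact h1

lemma b_zero_left (j : ZMod T.mult) : T.b 0 j = 1 := by
  unfold b
  rw [zero_add]
  have : T.a (0 : ZMod T.mult) = T.mult := by unfold a; simp
  rw [this]
  have hm := T.mult_ne_zero
  have : T.mult + T.a j - T.a j = T.mult := by omega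
  rw [this, Nat.div_self (Nat.pos_of_ne_zero hm)]

lemma mem_of_a_le {i : ZMod T.mult} {n : ℕ} (hmod : n % T.mult = i.val)
    (hge : T.a i ≤ n) : n ∈ T.carrier := by
  have h1 := T.a_mod i
  have hdvd : T.mult ∣ n - T.a i :=
    Nat.dvd_of_mod_eq_zero (Nat.sub_mod_eq_zero_of_mod_eq (by rw [hmod, h1]))
  obtain ⟨t, ht⟩ := hdvd
  rw [Nat.mul_comm] at ht
  have hn : n = T.a i + t * T.mult := by omega
  rw [hn]
  exact T.carrier.add_mem (T.a_mem i) (T.mul_mult_mem t)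

lemma a_injective : Function.Injective T.a := by
  haveI : NeZero T.mult := ⟨T.mult_ne_zero⟩
  intro i j h
  have h1 := T.a_mod i
  have h2 := T.a_mod j
  rw [h] at h1
  exact ZMod.val_injective _ (h1 ▸ h2)

lemma cast_a (i : ZMod T.mult) : ((T.a i : ℕ) : ZMod T.mult) = i := by
  haveI : NeZero T.mult := ⟨T.mult_ne_zero⟩
  exact ZMod.val_injective _ (by rw [ZMod.val_natCast, T.a_mod])

lemma mult_mingen : T.mult ∈ T.minimalGenerators := by
  refine ⟨T.mult_mem, T.mult_ne_zero, ?_⟩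
  rintro ⟨u, hu, v, hv, hu0, hv0, huv⟩
  have h1 := T.mult_le_mem hu hu0
  have h2 := T.mult_le_mem hv hv0
  have := T.mult_ne_zero
  omega

lemma mingen_subset : T.minimalGenerators ⊆ Set.range T.a := by
  haveI : NeZero T.mult := ⟨T.mult_ne_zero⟩
  rintro n ⟨hn, hn0, hdec⟩
  set i : ZMod T.mult := (n : ZMod T.mult) with hi
  have hmod : n % T.mult = i.val := by rw [hi, ZMod.val_natCast]
  have hle : T.a i ≤ n := T.a_le hn hn0 hmod
  refine ⟨i, ?_⟩
  by_contra hne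
  have hlt : T.a i < n := lt_of_le_of_ne hle (fun h => hne h)
  -- n - a i is a positive multiple of m, so n - m ∈ S and n decomposes
  have h1 := T.a_mod i
  have hdvd : T.mult ∣ n - T.a i :=
    Nat.dvd_of_mod_eq_zero (Nat.sub_mod_eq_zero_of_mod_eq (by rw [hmod, h1]))
  obtain ⟨t, ht⟩ := hdvd
  rw [Nat.mul_comm] at ht
  have hm := T.mult_ne_zero
  have ht1 : 1 ≤ t := by
    rcases Nat.eq_zero_or_pos t with h | h
    · subst h; simp at ht; omega
    · exact h
  have hnm : T.a i ≤ n - T.mult := by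
    have : T.mult ≤ t * T.mult := Nat.le_mul_of_pos_left _ ht1
    omega
  have hai := T.mult_le_a i
  have hmem : n - T.mult ∈ T.carrier := by
    refine T.mem_of_a_le (i := i) ?_ hnm
    have hge : T.mult ≤ n := by omega
    have : n - T.mult + T.mult = n := by omega
    have h2 : (n - T.mult) % T.mult = n % T.mult := by
      conv_rhs => rw [← this]
      rw [Nat.add_mod_right]
    rw [h2, hmod]
  exact hdec ⟨T.mult, T.mult_mem, n - T.mult, hmem, T.mult_ne_zero,
    by omega, by omega⟩

lemma a_mingen_of {i : ZMod T.mult} (hi : i ≠ 0)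
    (h : ∀ j l : ZMod T.mult, j ≠ 0 → l ≠ 0 → j + l = i → 0 < T.b j l) :
    T.a i ∈ T.minimalGenerators := by
  haveI : NeZero T.mult := ⟨T.mult_ne_zero⟩
  refine ⟨T.a_mem i, T.a_ne_zero i, ?_⟩
  rintro ⟨u, hu, v, hv, hu0, hv0, huv⟩
  set j : ZMod T.mult := (u : ZMod T.mult) with hj
  set l : ZMod T.mult := (v : ZMod T.mult) with hl
  have hjl : j + l = i := by
    rw [hj, hl, ← Nat.cast_add, huv, T.cast_a]
  have hju : T.a j ≤ u := T.a_le hu hu0 (by rw [hj, ZMod.val_natCast])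
  have hlv : T.a l ≤ v := T.a_le hv hv0 (by rw [hl, ZMod.val_natCast])
  have hile : T.a i ≤ T.a j + T.a l := by
    have := T.a_add_le j l
    rw [hjl] at this
    exact this
  have heq : T.a j + T.a l = T.a i := by omega
  have hm := T.mult_ne_zero
  have hj0 : j ≠ 0 := by
    intro h0
    rw [h0, zero_add] at hjl
    rw [h0, hjl] at heq
    have ha0 : T.a (0 : ZMod T.mult) = T.mult := by unfold a; simp
    omega
  have hl0 : l ≠ 0 := by
    intro h0
    rw [h0, add_zero] at hjl
    rw [h0, hjl] at heq
    have ha0 : T.a (0 : ZMod T.mult) = T.mult := by unfold a; simp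
    omega
  have hb := h j l hj0 hl0 hjl
  rw [(T.b_eq_zero_iff j l).mpr (by rw [hjl]; exact heq)] at hb
  exact absurd hb (lt_irrefl 0)

lemma not_mingen_of_b_zero {j l : ZMod T.mult} (hj : j ≠ 0) (hl : l ≠ 0)
    (hb : T.b j l = 0) : j + l ≠ 0 ∧ T.a (j + l) ∉ T.minimalGenerators := by
  have heq := (T.b_eq_zero_iff j l).mp hb
  have hm := T.mult_ne_zero
  have hjl0 : j + l ≠ 0 := by
    rintro h0
    rw [h0] at heq
    have ha0 : T.a (0 : ZMod T.mult) = T.mult := by unfold a; simp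
    have := T.mult_le_a j
    have := T.mult_le_a l
    omega
  refine ⟨hjl0, ?_⟩
  intro hmem
  exact hmem.2.2 ⟨T.a j, T.a_mem j, T.a l, T.a_mem l, T.a_ne_zero j, T.a_ne_zero l, heq⟩

lemma med_iff_b_pos :
    T.IsMED ↔ ∀ i j : ZMod T.mult, i ≠ 0 → j ≠ 0 → 0 < T.b i j := by
  haveI : NeZero T.mult := ⟨T.mult_ne_zero⟩
  have hrange : (Set.range T.a).ncard = T.mult := by
    rw [← Set.image_univ, Set.ncard_image_of_injective _ T.a_injective,
      Set.ncard_univ, Nat.card_eq_fintype_card, ZMod.card]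
  constructor
  · intro hmed
    by_contra hneg
    push_neg at hneg
    obtain ⟨j, l, hj, hl, hb⟩ := hneg
    have hb0 : T.b j l = 0 := by omega
    obtain ⟨hjl0, hnot⟩ := T.not_mingen_of_b_zero hj hl hb0
    have hsub : T.minimalGenerators ⊆ Set.range T.a \ {T.a (j + l)} := by
      intro n hn
      exact ⟨T.mingen_subset hn, by rintro rfl; exact hnot hn⟩
    have hfin : (Set.range T.a).Finite := Set.finite_range _
    have hcard : (Set.range T.a \ {T.a (j + l)}).ncard = T.mult - 1 := by
      rw [Set.ncard_diff_singleton_of_mem (Set.mem_range_self (j + l)), hrange]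
    have hle : T.minimalGenerators.ncard ≤ T.mult - 1 := by
      rw [← hcard]
      exact Set.ncard_le_ncard hsub (hfin.subset Set.diff_subset)
    have hm := T.mult_ne_zero
    rw [IsMED] at hmed
    omega
  · intro h
    have heq : T.minimalGenerators = Set.range T.a := by
      apply Set.Subset.antisymm T.mingen_subset
      rintro n ⟨i, rfl⟩
      by_cases hi : i = 0
      · subst hi
        have ha0 : T.a (0 : ZMod T.mult) = T.mult := by unfold a; simp
        rw [ha0]
        exact T.mult_mingen
      · exact T.a_mingen_of hi (fun j l hj hl _ => h j l hj hl)
    rw [IsMED, heq, hrange]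

end Aux

section Res

variable (k : Type) [Field k] (S : NumericalSemigroup)

lemma aug_xv (j : ZMod S.mult) : S.aug k (S.xv k j) = 0 := by
  show Polynomial.constantCoeff ((X : Polynomial k) ^ S.a j) = 0
  rw [map_pow]
  have hx : Polynomial.constantCoeff (X : Polynomial k) = 0 := coeff_X_zero
  rw [hx, zero_pow (S.a_ne_zero j)]

lemma xv_mem_mIdeal (j : ZMod S.mult) : S.xv k j ∈ S.mIdeal k :=
  RingHom.mem_ker.mpr (aug_xv k S j)

lemma coeff_mem_mIdeal {e b : ℕ} (hb : 0 < b) :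
    ((-1 : S.toRing k) ^ e * S.xv k 0 ^ b) ∈ S.mIdeal k :=
  Ideal.mul_mem_left _ _ (Ideal.pow_mem_of_mem _ (xv_mem_mIdeal k S 0) b hb)

lemma neg_one_not_mem_mIdeal : (-1 : S.toRing k) ∉ S.mIdeal k := by
  intro h
  have h2 : S.aug k (-1) = 0 := RingHom.mem_ker.mp h
  rw [map_neg, map_one] at h2
  exact one_ne_zero (neg_eq_zero.mp h2)

lemma coord_mem_of_mem_smul {σ : Type} {I : Ideal (S.toRing k)}
    {f : σ →₀ S.toRing k}
    (hf : f ∈ I • (⊤ : Submodule (S.toRing k) (σ →₀ S.toRing k))) (w : σ) :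
    f w ∈ I := by
  refine Submodule.smul_induction_on hf ?_ ?_
  · intro r hr n _
    rw [Finsupp.smul_apply, smul_eq_mul]
    exact Ideal.mul_mem_right _ _ hr
  · intro g1 g2 hg1 hg2
    rw [Finsupp.add_apply]
    exact Ideal.add_mem _ hg1 hg2

lemma del_single (d : ℕ) (w : Word S.mult (d + 1)) (c : S.toRing k) :
    S.del k d (Finsupp.single w c) =
      c • (S.xv k (w.1 (Fin.last d)) • E k S (trunc w.1)
        + ∑ i : Fin d,
            ((-1 : S.toRing k) ^ (d - (i : ℕ)) *
                S.xv k 0 ^ S.b (w.1 i.castSucc) (w.1 i.succ)) •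
              E k S (tau i w.1)) := by
  unfold del
  rw [Finsupp.lift_apply]
  exact Finsupp.sum_single_index (zero_smul _ _)

lemma E_apply_eq {d : ℕ} (v : Fin d → ZMod S.mult) (z : Word S.mult d) (h : v = z.1) :
    (E k S v) z = 1 := by
  have hcond : ∀ p : Fin d, 0 < (p : ℕ) → v p ≠ 0 := by rw [h]; exact z.2
  unfold E
  rw [dif_pos hcond]
  have hz : (⟨v, hcond⟩ : Word S.mult d) = z := Subtype.ext h
  rw [hz, Finsupp.single_eq_same]

lemma E_apply_ne {d : ℕ} (v : Fin d → ZMod S.mult) (z : Word S.mult d) (h : v ≠ z.1) :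
    (E k S v) z = 0 := by
  unfold E
  split
  · exact Finsupp.single_eq_of_ne' (fun hc => h (congrArg Subtype.val hc))
  · rfl

lemma del_one_coord (w : Word S.mult 2) (z : Word S.mult 1)
    (hne : trunc w.1 ≠ z.1) (heq : tau 0 w.1 = z.1)
    (hbv : S.b (w.1 (Fin.castSucc 0)) (w.1 (Fin.succ 0)) = 0) :
    (S.del k 1 (Finsupp.single w 1)) z = -1 := by
  rw [del_single, one_smul, Fin.sum_univ_one, Finsupp.add_apply,
    Finsupp.smul_apply, Finsupp.smul_apply, E_apply_ne k S _ _ hne,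
    E_apply_eq k S _ _ heq, hbv]
  simp

end Res

/-- **Theorem 3.2 (second assertion).** The infinite Apéry resolution of `k` over
`R = k[S]` is minimal, i.e. `∂(F_d) ⊆ 𝔪·F_{d-1}` for every `d ≥ 1`, if and only if `S`
has maximal embedding dimension. -/
theorem infinite_apery_resolution_minimal_iff_MED (k : Type) [Field k]
    (S : NumericalSemigroup) :
    (∀ d : ℕ, LinearMap.range (S.del k d) ≤
      S.mIdeal k • (⊤ : Submodule (S.toRing k) (Word S.mult d →₀ S.toRing k))) ↔
    S.IsMED := by
  rw [S.med_iff_b_pos]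
  constructor
  · -- minimality implies all b's positive
    intro hmin i j hi hj
    by_contra hb
    push_neg at hb
    have hb0 : S.b i j = 0 := by omega
    have hw : ∀ p : Fin 2, 0 < (p : ℕ) → (![i, j] : Fin 2 → ZMod S.mult) p ≠ 0 := by
      intro p hp
      fin_cases p
      · simp at hp
      · simpa using hj
    have hw2 : ∀ p : Fin 1, 0 < (p : ℕ) → (fun _ : Fin 1 => i + j) p ≠ 0 :=
      fun p hp => absurd p.2 (by omega)
    have hmem := hmin 1 (LinearMap.mem_range_self (S.del k 1)
      (Finsupp.single (⟨![i, j], hw⟩ : Word S.mult 2) 1))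
    have hcoord := coord_mem_of_mem_smul k S hmem ⟨fun _ => i + j, hw2⟩
    have hcs : (![i, j] : Fin 2 → ZMod S.mult) (Fin.castSucc 0) = i := by simp
    have hsc : (![i, j] : Fin 2 → ZMod S.mult) (Fin.succ 0) = j := by simp
    have hval : (S.del k 1 (Finsupp.single (⟨![i, j], hw⟩ : Word S.mult 2) 1))
        ⟨fun _ => i + j, hw2⟩ = -1 := by
      apply del_one_coord
      · intro h
        have h0 := congrFun h 0
        simp only [trunc, Fin.castSucc_zero, Matrix.cons_val_zero] at h0
        first
        | exact hj (left_eq_add.mp h0)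
        | exact hj h0
      · funext p
        have hp : p = 0 := Subsingleton.elim _ _
        subst hp
        show tau 0 ![i, j] 0 = i + j
        unfold tau
        simp
      · show S.b ((![i, j] : Fin 2 → ZMod S.mult) (Fin.castSucc 0))
            ((![i, j] : Fin 2 → ZMod S.mult) (Fin.succ 0)) = 0
        rw [hcs, hsc]
        exact hb0
    exact neg_one_not_mem_mIdeal k S (hval ▸ hcoord)
  · -- all b's positive implies minimality
    intro hb d
    intro x hx
    obtain ⟨f, rfl⟩ := hx
    induction f using Finsupp.induction_linear with
    | zero => rw [map_zero]; exact Submodule.zero_mem _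
    | add f g hf hg => rw [map_add]; exact Submodule.add_mem _ hf hg
    | single w c =>
      rw [del_single]
      refine Submodule.smul_mem _ c (Submodule.add_mem _ ?_ (Submodule.sum_mem _ ?_))
      · exact Submodule.smul_mem_smul (xv_mem_mIdeal k S _) Submodule.mem_top
      · intro p _
        refine Submodule.smul_mem_smul ?_ Submodule.mem_top
        have hsucc : w.1 p.succ ≠ 0 := w.2 p.succ (by simp)
        by_cases hp : w.1 p.castSucc = 0
        · rw [hp]
          exact coeff_mem_mIdeal k S (by rw [S.b_zero_left]; omega)
        · exact coeff_mem_mIdeal k S (hb _ _ hp hsucc)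

end NumericalSemigroup
end

section
/- The numerical semigroups S = ⟨5, 6, 19⟩ and S″ = ⟨5, 31, 99⟩ lie in the same face of the Kunz cone C_5 (they have the same Kunz poset), yet their associated graded rings differ homologically: with Q′ = k[y, x_1, x_4] mapping onto k[S] via y ↦ t⁵, x_1 ↦ t⁶, x_4 ↦ t¹⁹ (resp. onto k[S″] via y ↦ t⁵, x_1 ↦ t³¹, x_4 ↦ t⁹⁹), the ideals of initial forms are I_S^* = (x_1⁵, y x_4, x_1 x_4, x_4²) and I_{S″}^* = (x_1⁴, x_1 x_4, x_4²); in particular I_S^* has minimal number of generators 4 while I_{S″}^* has minimal number of generators 3, so β_1^{Q′}(gr_𝔪(k[S])) = 4 ≠ 3 = β_1^{Q′}(gr_𝔪(k[S″])). (Part of the Proposition in Section 5, via Example 5.3.) -/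
open MvPolynomial

/-- `ap M m i` is the smallest element of the submonoid `M ⊆ ℕ` congruent to `i` mod `m`
(the Apéry element `a_i` when `m` is the multiplicity of `M`). -/
noncomputable def ap (M : AddSubmonoid ℕ) (m i : ℕ) : ℕ :=
  sInf {n | n ∈ M ∧ n % m = i % m}

/-- Two numerical semigroups of multiplicity `m` lie in the same face of the Kunz cone
`C_m`: the Apéry set equalities `a_i + a_j = a_{(i+j) mod m}` hold in one iff they hold
in the other (identical Kunz posets). -/
def SameFace (M M' : AddSubmonoid ℕ) (m : ℕ) : Prop :=
  ∀ i j : ℕ, 1 ≤ i → i ≤ m - 1 → 1 ≤ j → j ≤ m - 1 → (i + j) % m ≠ 0 →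
    (ap M m i + ap M m j = ap M m ((i + j) % m) ↔
      ap M' m i + ap M' m j = ap M' m ((i + j) % m))

variable (k : Type) [Field k]

/-- The map `Q' = k[z_1, …, z_e] → k[t]` sending `z_i ↦ t^{n_i}`. -/
noncomputable def phi {N : ℕ} (e : Fin N → ℕ) :
    MvPolynomial (Fin N) k →ₐ[k] Polynomial k :=
  aeval fun i => Polynomial.X ^ e i

/-- The defining toric ideal `I' = ker(Q' → k[t])`. -/
noncomputable def toricIdeal {N : ℕ} (e : Fin N → ℕ) : Ideal (MvPolynomial (Fin N) k) :=
  RingHom.ker (phi k e).toRingHom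

/-- The initial form `f^*`: the homogeneous component of `f` of lowest degree (with
respect to the standard grading, each variable in degree 1). -/
noncomputable def initialForm {N : ℕ} (f : MvPolynomial (Fin N) k) :
    MvPolynomial (Fin N) k :=
  homogeneousComponent (sInf {n | homogeneousComponent n f ≠ 0}) f

/-- The ideal of initial forms `I^* = ⟨f^* : 0 ≠ f ∈ I⟩`, so that
`gr_𝔪(k[S]) ≅ Q'/I^*`. -/
noncomputable def star {N : ℕ} (I : Ideal (MvPolynomial (Fin N) k)) :
    Ideal (MvPolynomial (Fin N) k) :=
  Ideal.span {g | ∃ f ∈ I, f ≠ 0 ∧ g = initialForm k f}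

/-- The minimal number of generators of an ideal `J ⊆ Q'`:
`μ(J) = dim_k J/(z_1, …, z_e)J = β₁^{Q'}(Q'/J)`. -/
noncomputable def mu {N : ℕ} (J : Ideal (MvPolynomial (Fin N) k)) : ℕ :=
  Module.finrank k (RestrictScalars k (MvPolynomial (Fin N) k)
    (↥J ⧸ ((Ideal.span (Set.range (X : Fin N → MvPolynomial (Fin N) k))) •
      (⊤ : Submodule (MvPolynomial (Fin N) k) ↥J))))

/-! ### Part 1: SameFace -/

lemma mem_closure_triple {a b c n : ℕ} :
    n ∈ AddSubmonoid.closure {a, b, c} ↔ ∃ x y z : ℕ, x*a + y*b + z*c = n := by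
  constructor
  · intro h
    induction h using AddSubmonoid.closure_induction with
    | mem w hw =>
      rcases hw with rfl | rfl | rfl
      · exact ⟨1,0,0, by ring⟩
      · exact ⟨0,1,0, by ring⟩
      · exact ⟨0,0,1, by ring⟩
    | zero => exact ⟨0,0,0, by ring⟩
    | add x y _ _ hx hy =>
      obtain ⟨x1,y1,z1,rfl⟩ := hx; obtain ⟨x2,y2,z2,rfl⟩ := hy
      exact ⟨x1+x2, y1+y2, z1+z2, by ring⟩
  · rintro ⟨x,y,z,rfl⟩
    have ha : a ∈ AddSubmonoid.closure ({a,b,c} : Set ℕ) := AddSubmonoid.subset_closure (by simp)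
    have hb : b ∈ AddSubmonoid.closure ({a,b,c} : Set ℕ) := AddSubmonoid.subset_closure (by simp)
    have hc : c ∈ AddSubmonoid.closure ({a,b,c} : Set ℕ) := AddSubmonoid.subset_closure (by simp)
    have h1 := AddSubmonoid.nsmul_mem _ ha x
    have h2 := AddSubmonoid.nsmul_mem _ hb y
    have h3 := AddSubmonoid.nsmul_mem _ hc z
    simp only [nsmul_eq_mul] at h1 h2 h3
    exact AddSubmonoid.add_mem _ (AddSubmonoid.add_mem _ h1 h2) h3

lemma ap_closure (a b c m i v : ℕ) (hv : ∃ x y z : ℕ, x*a+y*b+z*c = v) (hmod : v % m = i % m)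
    (hmin : ∀ x y z : ℕ, (x*a+y*b+z*c) % m = i % m → v ≤ x*a+y*b+z*c) :
    ap (AddSubmonoid.closure {a,b,c}) m i = v := by
  rw [ap]
  apply le_antisymm
  · exact Nat.sInf_le ⟨mem_closure_triple.mpr hv, hmod⟩
  · apply le_csInf
    · exact ⟨v, mem_closure_triple.mpr hv, hmod⟩
    · rintro n ⟨hn, hn2⟩
      obtain ⟨x,y,z,rfl⟩ := mem_closure_triple.mp hn
      exact hmin x y z hn2

lemma sameFace_part :
    SameFace (AddSubmonoid.closure {5, 6, 19}) (AddSubmonoid.closure {5, 31, 99}) 5 := by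
  have hA1 : ap (AddSubmonoid.closure {5,6,19}) 5 1 = 6 :=
    ap_closure 5 6 19 5 1 6 ⟨0,1,0, by norm_num⟩ (by norm_num) (fun x y z h => by
      rcases Nat.eq_zero_or_pos z with rfl|hz
      · rcases Nat.eq_zero_or_pos y with rfl|hy <;> omega
      · omega)
  have hA2 : ap (AddSubmonoid.closure {5,6,19}) 5 2 = 12 :=
    ap_closure 5 6 19 5 2 12 ⟨0,2,0, by norm_num⟩ (by norm_num) (fun x y z h => by
      rcases Nat.eq_zero_or_pos z with rfl|hz
      · rcases Nat.eq_zero_or_pos y with rfl|hy <;> omega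
      · omega)
  have hA3 : ap (AddSubmonoid.closure {5,6,19}) 5 3 = 18 :=
    ap_closure 5 6 19 5 3 18 ⟨0,3,0, by norm_num⟩ (by norm_num) (fun x y z h => by
      rcases Nat.eq_zero_or_pos z with rfl|hz
      · rcases Nat.eq_zero_or_pos y with rfl|hy <;> omega
      · omega)
  have hA4 : ap (AddSubmonoid.closure {5,6,19}) 5 4 = 19 :=
    ap_closure 5 6 19 5 4 19 ⟨0,0,1, by norm_num⟩ (by norm_num) (fun x y z h => by
      rcases Nat.eq_zero_or_pos z with rfl|hz
      · rcases Nat.eq_zero_or_pos y with rfl|hy <;> omega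
      · omega)
  have hB1 : ap (AddSubmonoid.closure {5,31,99}) 5 1 = 31 :=
    ap_closure 5 31 99 5 1 31 ⟨0,1,0, by norm_num⟩ (by norm_num) (fun x y z h => by
      rcases Nat.eq_zero_or_pos z with rfl|hz
      · rcases Nat.eq_zero_or_pos y with rfl|hy <;> omega
      · omega)
  have hB2 : ap (AddSubmonoid.closure {5,31,99}) 5 2 = 62 :=
    ap_closure 5 31 99 5 2 62 ⟨0,2,0, by norm_num⟩ (by norm_num) (fun x y z h => by
      rcases Nat.eq_zero_or_pos z with rfl|hz
      · rcases Nat.eq_zero_or_pos y with rfl|hy <;> omega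
      · omega)
  have hB3 : ap (AddSubmonoid.closure {5,31,99}) 5 3 = 93 :=
    ap_closure 5 31 99 5 3 93 ⟨0,3,0, by norm_num⟩ (by norm_num) (fun x y z h => by
      rcases Nat.eq_zero_or_pos z with rfl|hz
      · rcases Nat.eq_zero_or_pos y with rfl|hy <;> omega
      · omega)
  have hB4 : ap (AddSubmonoid.closure {5,31,99}) 5 4 = 99 :=
    ap_closure 5 31 99 5 4 99 ⟨0,0,1, by norm_num⟩ (by norm_num) (fun x y z h => by
      rcases Nat.eq_zero_or_pos z with rfl|hz
      · rcases Nat.eq_zero_or_pos y with rfl|hy <;> omega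
      · omega)
  intro i j hi1 hi4 hj1 hj4 hne
  interval_cases i <;> interval_cases j <;>
    first
      | (exfalso; omega)
      | (norm_num [hA1, hA2, hA3, hA4, hB1, hB2, hB3, hB4])

/-! ### Part 2: machinery for initial ideals -/

def wdeg (w : Fin 3 → ℕ) (d : Fin 3 →₀ ℕ) : ℕ := d 0 * w 0 + d 1 * w 1 + d 2 * w 2

lemma key_arith_S (d0 d1 d2 e0 e1 e2 : ℕ) (hw : d0*5+d1*6+d2*19 = e0*5+e1*6+e2*19)
    (hlt : ¬(d0+d1+d2 < e0+e1+e2)) (h1 : e1 ≤ 4) (h2 : ¬(1 ≤ e0 ∧ 1 ≤ e2))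
    (h3 : ¬(1 ≤ e1 ∧ 1 ≤ e2)) (h4 : e2 ≤ 1) : d0 = e0 ∧ d1 = e1 ∧ d2 = e2 := by
  have hd2 : d2 ≤ 1 := by omega
  interval_cases e2 <;> interval_cases d2 <;> omega

lemma key_arith_S2 (d0 d1 d2 e0 e1 e2 : ℕ) (hw : d0*5+d1*31+d2*99 = e0*5+e1*31+e2*99)
    (hlt : ¬(d0+d1+d2 < e0+e1+e2)) (h1 : e1 ≤ 3)
    (h3 : ¬(1 ≤ e1 ∧ 1 ≤ e2)) (h4 : e2 ≤ 1) : d0 = e0 ∧ d1 = e1 ∧ d2 = e2 := by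
  have hd2 : d2 ≤ e2 := by omega
  interval_cases e2 <;> interval_cases d2 <;> omega

lemma deg3 (d : Fin 3 →₀ ℕ) : d.degree = d 0 + d 1 + d 2 := by
  rw [Finsupp.degree_apply]
  rw [Finset.sum_subset (Finset.subset_univ _) (fun i _ hni => Finsupp.notMem_support_iff.mp hni)]
  exact Fin.sum_univ_three d

lemma le3 {d e : Fin 3 →₀ ℕ} : d ≤ e ↔ d 0 ≤ e 0 ∧ d 1 ≤ e 1 ∧ d 2 ≤ e 2 := by
  rw [Finsupp.le_def]
  exact ⟨fun h => ⟨h 0, h 1, h 2⟩, fun ⟨h0,h1,h2⟩ i => by fin_cases i <;> assumption⟩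

lemma phi_monomial (w : Fin 3 → ℕ) (d : Fin 3 →₀ ℕ) (c : k) :
    phi k w (monomial d c) = Polynomial.C c * Polynomial.X ^ wdeg w d := by
  rw [phi, aeval_monomial]
  congr 1
  rw [Finsupp.prod_fintype _ _ (by intro i; simp), Fin.prod_univ_three]
  simp only [← pow_mul, ← pow_add, wdeg]
  ring_nf

lemma coeff_phi (w : Fin 3 → ℕ) (f : MvPolynomial (Fin 3) k) (N : ℕ) :
    (phi k w f).coeff N = ∑ d ∈ f.support, if wdeg w d = N then f.coeff d else 0 := by
  conv_lhs => rw [f.as_sum, map_sum]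
  rw [Polynomial.finset_sum_coeff]
  refine Finset.sum_congr rfl fun d _ => ?_
  rw [phi_monomial, Polynomial.coeff_C_mul, Polynomial.coeff_X_pow]
  split_ifs with h1 h2 h2 <;> simp_all [eq_comm]

lemma mem_toricIdeal_iff (w : Fin 3 → ℕ) (f : MvPolynomial (Fin 3) k) :
    f ∈ toricIdeal k w ↔
      ∀ N, (∑ d ∈ f.support, if wdeg w d = N then f.coeff d else 0) = 0 := by
  rw [toricIdeal, RingHom.mem_ker]
  show phi k w f = 0 ↔ _
  rw [Polynomial.ext_iff]
  simp_rw [coeff_phi, Polynomial.coeff_zero]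

lemma coeff_low_zero {N : ℕ} (f : MvPolynomial (Fin N) k) (d : Fin N →₀ ℕ)
    (hd : d.degree < sInf {n | homogeneousComponent n f ≠ 0}) : coeff d f = 0 := by
  have h1 : homogeneousComponent d.degree f = 0 := by
    by_contra h
    exact absurd (Nat.sInf_le (show d.degree ∈ {n | homogeneousComponent n f ≠ 0} from h))
      (not_le.mpr hd)
  have := coeff_homogeneousComponent (σ := Fin N) (R := k) d.degree f d
  rw [h1, if_pos rfl] at this
  simpa using this.symm

lemma mem_support_initialForm {N : ℕ} {f : MvPolynomial (Fin N) k} {e : Fin N →₀ ℕ}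
    (he : e ∈ (initialForm k f).support) :
    coeff e f ≠ 0 ∧ e.degree = sInf {n | homogeneousComponent n f ≠ 0} := by
  rw [mem_support_iff, initialForm, coeff_homogeneousComponent] at he
  by_cases h : e.degree = sInf {n | homogeneousComponent n f ≠ 0}
  · rw [if_pos h] at he; exact ⟨he, h⟩
  · rw [if_neg h] at he; simp at he

lemma initialForm_binomial {N : ℕ} (d₁ d₂ : Fin N →₀ ℕ) (h : d₁.degree < d₂.degree) :
    initialForm k (monomial d₁ (1:k) - monomial d₂ 1) = monomial d₁ (1:k) := by
  set f : MvPolynomial (Fin N) k := monomial d₁ (1:k) - monomial d₂ 1 with hf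
  have hne : d₁ ≠ d₂ := fun he => absurd h (by rw [he]; exact lt_irrefl _)
  have hc1 : coeff d₁ f = 1 := by
    rw [hf, coeff_sub, coeff_monomial, coeff_monomial, if_pos rfl, if_neg (Ne.symm hne)]; ring
  have hsupp : f.support ⊆ {d₁, d₂} := by
    intro d hd
    rw [mem_support_iff] at hd
    by_contra hmem
    simp only [Finset.mem_insert, Finset.mem_singleton, not_or] at hmem
    rw [hf, coeff_sub, coeff_monomial, coeff_monomial, if_neg (Ne.symm hmem.1),
      if_neg (Ne.symm hmem.2)] at hd
    simp at hd
  have hsinf : sInf {n | homogeneousComponent n f ≠ 0} = d₁.degree := by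
    apply le_antisymm
    · apply Nat.sInf_le
      show homogeneousComponent d₁.degree f ≠ 0
      intro h0
      have := coeff_homogeneousComponent (σ := Fin N) (R := k) d₁.degree f d₁
      rw [h0, if_pos rfl, hc1] at this
      simpa using this.symm
    · apply le_csInf
      · exact ⟨d₁.degree, by
          intro h0
          have := coeff_homogeneousComponent (σ := Fin N) (R := k) d₁.degree f d₁
          rw [h0, if_pos rfl, hc1] at this
          simpa using this.symm⟩
      · rintro n hn
        obtain ⟨d, hd⟩ := ne_zero_iff.mp hn
        rw [coeff_homogeneousComponent] at hd
        by_cases hdeg : d.degree = n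
        · have hdsupp : d ∈ f.support := by
            rw [mem_support_iff]; rw [if_pos hdeg] at hd; exact hd
          rcases Finset.mem_insert.mp (hsupp hdsupp) with rfl | hd2
          · omega
          · rw [Finset.mem_singleton] at hd2; subst hd2; omega
        · rw [if_neg hdeg] at hd; simp at hd
  rw [initialForm, hsinf]
  ext e
  rw [coeff_homogeneousComponent, coeff_monomial]
  by_cases he1 : d₁ = e
  · subst he1; rw [if_pos rfl, if_pos rfl, hc1]
  · rw [if_neg he1]
    by_cases hdeg : e.degree = d₁.degree
    · rw [if_pos hdeg]
      by_cases he2 : d₂ = e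
      · subst he2; omega
      · rw [hf, coeff_sub, coeff_monomial, coeff_monomial, if_neg he1, if_neg he2]; ring
    · rw [if_neg hdeg]

lemma binomial_mem (w : Fin 3 → ℕ) (d₁ d₂ : Fin 3 →₀ ℕ) (h : wdeg w d₁ = wdeg w d₂) :
    monomial d₁ (1:k) - monomial d₂ 1 ∈ toricIdeal k w := by
  rw [toricIdeal, RingHom.mem_ker]
  show phi k w _ = 0
  rw [map_sub, phi_monomial, phi_monomial, h, sub_self]

lemma binomial_ne (d₁ d₂ : Fin 3 →₀ ℕ) (h : d₁ ≠ d₂) :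
    monomial d₁ (1:k) - monomial d₂ 1 ≠ 0 := by
  intro h0
  have := congrArg (coeff d₁) h0
  rw [coeff_sub, coeff_monomial, coeff_monomial, if_pos rfl, if_neg (Ne.symm h)] at this
  simp at this

lemma mem_star_of_binomial (w : Fin 3 → ℕ) (d₁ d₂ : Fin 3 →₀ ℕ)
    (hw : wdeg w d₁ = wdeg w d₂) (hd : d₁.degree < d₂.degree) :
    monomial d₁ (1:k) ∈ star k (toricIdeal k w) := by
  have hne : d₁ ≠ d₂ := fun he => absurd hd (by rw [he]; exact lt_irrefl _)
  exact Ideal.subset_span ⟨monomial d₁ 1 - monomial d₂ 1, binomial_mem k w d₁ d₂ hw,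
    binomial_ne k d₁ d₂ hne, (initialForm_binomial k d₁ d₂ hd).symm⟩

lemma Xmul (i j : Fin 3) : (X i * X j : MvPolynomial (Fin 3) k) =
    monomial (Finsupp.single i 1 + Finsupp.single j 1) 1 := by
  rw [← pow_one (X i), ← pow_one (X j), X_pow_eq_monomial, X_pow_eq_monomial,
    monomial_mul, one_mul]

lemma star_S : star k (toricIdeal k ![5, 6, 19]) =
    Ideal.span {X 1 ^ 5, X 0 * X 2, X 1 * X 2, X 2 ^ 2} := by
  have hset : ({X 1 ^ 5, X 0 * X 2, X 1 * X 2, X 2 ^ 2} : Set (MvPolynomial (Fin 3) k)) =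
      (fun s => monomial s (1:k)) '' {Finsupp.single 1 5,
        Finsupp.single 0 1 + Finsupp.single 2 1,
        Finsupp.single 1 1 + Finsupp.single 2 1, Finsupp.single 2 2} := by
    rw [Set.image_insert_eq, Set.image_insert_eq, Set.image_insert_eq, Set.image_singleton,
      ← X_pow_eq_monomial, ← X_pow_eq_monomial, ← Xmul k 0 2, ← Xmul k 1 2]
  apply le_antisymm
  · rw [hset]
    unfold _root_.star
    refine Ideal.span_le.mpr ?_
    rintro g ⟨f, hfI, hf0, rfl⟩
    rw [SetLike.mem_coe, mem_ideal_span_monomial_image]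
    intro e he
    obtain ⟨hce, hdeg⟩ := mem_support_initialForm k he
    by_contra hnot
    push_neg at hnot
    have h1 := hnot _ (by simp : (Finsupp.single 1 5 : Fin 3 →₀ ℕ) ∈ _)
    have h2 := hnot _ (by simp : (Finsupp.single 0 1 + Finsupp.single 2 1 : Fin 3 →₀ ℕ) ∈ _)
    have h3 := hnot _ (by simp : (Finsupp.single 1 1 + Finsupp.single 2 1 : Fin 3 →₀ ℕ) ∈ _)
    have h4 := hnot _ (by simp : (Finsupp.single 2 2 : Fin 3 →₀ ℕ) ∈ _)
    rw [le3] at h1 h2 h3 h4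
    simp [Finsupp.single_apply] at h1 h2 h3 h4
    have key := (mem_toricIdeal_iff k _ f).mp hfI (wdeg ![5,6,19] e)
    rw [Finset.sum_eq_single e ?_ ?_] at key
    · rw [if_pos rfl] at key; exact hce key
    · intro d hd hdne
      rw [if_neg ?_]
      intro hw
      by_cases hlt : d.degree < e.degree
      · rw [hdeg] at hlt
        exact (mem_support_iff.mp hd) (coeff_low_zero k f d hlt)
      · apply hdne
        simp only [wdeg, Matrix.cons_val_zero, Matrix.cons_val_one, Matrix.head_cons,
          Matrix.cons_val_two, Matrix.tail_cons] at hw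
        rw [deg3, deg3] at hlt
        have hco := key_arith_S (d 0) (d 1) (d 2) (e 0) (e 1) (e 2) (by omega) (by omega)
          (by omega) (by omega) (by omega) (by omega)
        apply Finsupp.ext
        intro i
        fin_cases i <;> simp <;> omega
    · intro h
      exact absurd (mem_support_iff.mpr hce) h
  · rw [Ideal.span_le]
    rintro g hg
    simp only [Set.mem_insert_iff, Set.mem_singleton_iff] at hg
    rcases hg with rfl | rfl | rfl | rfl
    · rw [X_pow_eq_monomial]
      exact mem_star_of_binomial k _ _ (Finsupp.single 0 6)
        (by simp [wdeg, Finsupp.single_apply]) (by simp [deg3, Finsupp.single_apply])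
    · rw [Xmul]
      exact mem_star_of_binomial k _ _ (Finsupp.single 1 4)
        (by simp [wdeg, Finsupp.single_apply]) (by simp [deg3, Finsupp.single_apply])
    · rw [Xmul]
      exact mem_star_of_binomial k _ _ (Finsupp.single 0 5)
        (by simp [wdeg, Finsupp.single_apply]) (by simp [deg3, Finsupp.single_apply])
    · rw [X_pow_eq_monomial]
      exact mem_star_of_binomial k _ _ (Finsupp.single 0 4 + Finsupp.single 1 3)
        (by simp [wdeg, Finsupp.single_apply]) (by simp [deg3, Finsupp.single_apply])

lemma star_S2 : star k (toricIdeal k ![5, 31, 99]) =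
    Ideal.span {X 1 ^ 4, X 1 * X 2, X 2 ^ 2} := by
  have hset : ({X 1 ^ 4, X 1 * X 2, X 2 ^ 2} : Set (MvPolynomial (Fin 3) k)) =
      (fun s => monomial s (1:k)) '' {Finsupp.single 1 4,
        Finsupp.single 1 1 + Finsupp.single 2 1, Finsupp.single 2 2} := by
    rw [Set.image_insert_eq, Set.image_insert_eq, Set.image_singleton,
      ← X_pow_eq_monomial, ← X_pow_eq_monomial, ← Xmul k 1 2]
  apply le_antisymm
  · rw [hset]
    unfold _root_.star
    refine Ideal.span_le.mpr ?_
    rintro g ⟨f, hfI, hf0, rfl⟩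
    rw [SetLike.mem_coe, mem_ideal_span_monomial_image]
    intro e he
    obtain ⟨hce, hdeg⟩ := mem_support_initialForm k he
    by_contra hnot
    push_neg at hnot
    have h1 := hnot _ (by simp : (Finsupp.single 1 4 : Fin 3 →₀ ℕ) ∈ _)
    have h3 := hnot _ (by simp : (Finsupp.single 1 1 + Finsupp.single 2 1 : Fin 3 →₀ ℕ) ∈ _)
    have h4 := hnot _ (by simp : (Finsupp.single 2 2 : Fin 3 →₀ ℕ) ∈ _)
    rw [le3] at h1 h3 h4
    simp [Finsupp.single_apply] at h1 h3 h4
    have key := (mem_toricIdeal_iff k _ f).mp hfI (wdeg ![5,31,99] e)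
    rw [Finset.sum_eq_single e ?_ ?_] at key
    · rw [if_pos rfl] at key; exact hce key
    · intro d hd hdne
      rw [if_neg ?_]
      intro hw
      by_cases hlt : d.degree < e.degree
      · rw [hdeg] at hlt
        exact (mem_support_iff.mp hd) (coeff_low_zero k f d hlt)
      · apply hdne
        simp only [wdeg, Matrix.cons_val_zero, Matrix.cons_val_one, Matrix.head_cons,
          Matrix.cons_val_two, Matrix.tail_cons] at hw
        rw [deg3, deg3] at hlt
        have hco := key_arith_S2 (d 0) (d 1) (d 2) (e 0) (e 1) (e 2) (by omega) (by omega)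
          (by omega) (by omega) (by omega)
        apply Finsupp.ext
        intro i
        fin_cases i <;> simp <;> omega
    · intro h
      exact absurd (mem_support_iff.mpr hce) h
  · rw [Ideal.span_le]
    rintro g hg
    simp only [Set.mem_insert_iff, Set.mem_singleton_iff] at hg
    rcases hg with rfl | rfl | rfl
    · rw [X_pow_eq_monomial]
      exact mem_star_of_binomial k _ _ (Finsupp.single 0 5 + Finsupp.single 2 1)
        (by simp [wdeg, Finsupp.single_apply]) (by simp [deg3, Finsupp.single_apply])
    · rw [Xmul]
      exact mem_star_of_binomial k _ _ (Finsupp.single 0 26)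
        (by simp [wdeg, Finsupp.single_apply]) (by simp [deg3, Finsupp.single_apply])
    · rw [X_pow_eq_monomial]
      exact mem_star_of_binomial k _ _ (Finsupp.single 0 21 + Finsupp.single 1 3)
        (by simp [wdeg, Finsupp.single_apply]) (by simp [deg3, Finsupp.single_apply])

/-! ### Part 3: mu computations -/

lemma mu_monomial_span (r : ℕ) (E : Fin r → (Fin 3 →₀ ℕ)) (hinj : Function.Injective E)
    (hmin : ∀ i j l, ¬ (Finsupp.single l 1 + E j ≤ E i)) :
    mu k (Ideal.span ((fun s => monomial s (1:k)) '' Set.range E)) = r := by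
  set Q := MvPolynomial (Fin 3) k
  set J : Ideal Q := Ideal.span ((fun s => monomial s (1:k)) '' Set.range E) with hJ
  set m : Ideal Q := Ideal.span (Set.range (X : Fin 3 → Q)) with hm
  have hmJ : ∀ x ∈ m * J, ∀ d ∈ x.support, ∃ i l, Finsupp.single l 1 + E i ≤ d := by
    intro x hx
    have hle : m * J ≤ Ideal.span ((fun s => monomial s (1:k)) ''
        {d | ∃ i l, d = Finsupp.single l 1 + E i}) := by
      rw [Ideal.mul_le]
      intro p hp q hq
      rw [mem_ideal_span_monomial_image]
      intro d hd
      have hd' := MvPolynomial.support_mul p q hd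
      obtain ⟨dp, hdp, dq, hdq, rfl⟩ := Finset.mem_add.mp hd'
      have hp2 : p ∈ Ideal.span ((X : Fin 3 → Q) '' Set.univ) := by rwa [Set.image_univ]
      obtain ⟨l, -, hl⟩ := mem_ideal_span_X_image.mp hp2 dp hdp
      obtain ⟨s, ⟨i, rfl⟩, hs⟩ := mem_ideal_span_monomial_image.mp hq dq hdq
      exact ⟨Finsupp.single l 1 + E i, ⟨i, l, rfl⟩,
        add_le_add (Finsupp.single_le_iff.mpr (Nat.one_le_iff_ne_zero.mpr hl)) hs⟩
    intro d hd
    obtain ⟨s, ⟨i, l, rfl⟩, hle'⟩ := mem_ideal_span_monomial_image.mp (hle hx) d hd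
    exact ⟨i, l, hle'⟩
  have hgmem : ∀ i, monomial (E i) (1:k) ∈ J := fun i =>
    Ideal.subset_span ⟨E i, ⟨i, rfl⟩, rfl⟩
  let g : Fin r → ↥J := fun i => ⟨monomial (E i) 1, hgmem i⟩
  let M := (↥J ⧸ (m • (⊤ : Submodule Q ↥J)))
  let resMk : ↥J → RestrictScalars k Q M := fun y => (Submodule.Quotient.mk y : M)
  let v : Fin r → RestrictScalars k Q M := fun i => resMk (g i)
  have hsmul : ∀ (a : k) (y : ↥J), a • resMk y = resMk ((C a : Q) • y) := by
    intro a y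
    show (algebraMap k Q a) • (Submodule.Quotient.mk y : M)
      = (Submodule.Quotient.mk ((C a : Q) • y) : M)
    rw [MvPolynomial.algebraMap_eq, Submodule.Quotient.mk_smul]
  have hsum : ∀ c : Fin r → k, (∑ j, c j • v j) =
      resMk (∑ j, (C (c j) : Q) • g j) := by
    intro c
    rw [Finset.sum_congr rfl (fun j _ => hsmul (c j) (g j))]
    show _ = Submodule.mkQ _ (∑ j, (C (c j) : Q) • g j)
    rw [map_sum]
    rfl
  have hcoe : ∀ c : Fin r → k, ((∑ j, (C (c j) : Q) • g j : ↥J) : Q) =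
      ∑ j, monomial (E j) (c j) := by
    intro c
    rw [AddSubmonoidClass.coe_finset_sum]
    refine Finset.sum_congr rfl fun j _ => ?_
    show (C (c j) : Q) • (monomial (E j) 1 : Q) = _
    rw [smul_eq_mul, C_mul_monomial, mul_one]
  have hcoeff : ∀ (c : Fin r → k) i, coeff (E i) (∑ j, monomial (E j) (c j)) = c i := by
    intro c i
    rw [MvPolynomial.coeff_sum]
    rw [Finset.sum_eq_single i (fun j _ hji => by
        rw [coeff_monomial, if_neg (fun h => hji (hinj h))])
      (fun h => absurd (Finset.mem_univ i) h)]
    rw [coeff_monomial, if_pos rfl]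
  have hind : LinearIndependent k v := by
    refine (@Fintype.linearIndependent_iff _ k _ _ _ (RestrictScalars.module k Q M) v _).mpr ?_
    intro c hc i
    replace hc := (hsum c).symm.trans hc
    have hu : (∑ j, (C (c j) : Q) • g j : ↥J) ∈ m • (⊤ : Submodule Q ↥J) := by
      rw [← Submodule.Quotient.mk_eq_zero]
      exact hc
    rw [Submodule.mem_smul_top_iff] at hu
    rw [Ideal.smul_eq_mul] at hu
    rw [hcoe c] at hu
    by_contra hci
    have hsupp : E i ∈ (∑ j, monomial (E j) (c j)).support :=
      mem_support_iff.mpr (by rw [hcoeff c i]; exact hci)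
    obtain ⟨j, l, hle'⟩ := hmJ _ hu (E i) hsupp
    exact hmin i j l hle'
  have hspan : ⊤ ≤ Submodule.span k (Set.range v) := by
    rintro x -
    obtain ⟨y, rfl⟩ := Submodule.Quotient.mk_surjective _ x
    obtain ⟨p, hp⟩ := y
    have hmain : ∀ (p : Q) (hp : p ∈ J),
        resMk ⟨p, hp⟩ ∈ Submodule.span k (Set.range v) := by
      intro p hp
      induction hp using Submodule.span_induction with
      | mem x hx =>
        obtain ⟨s, ⟨i, rfl⟩, rfl⟩ := hx
        exact Submodule.subset_span ⟨i, rfl⟩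
      | zero =>
        have hz : resMk ⟨0, J.zero_mem⟩ = 0 := by
          show (Submodule.Quotient.mk (0 : ↥J) : M) = 0
          rw [Submodule.Quotient.mk_zero]
        rw [hz]
        exact Submodule.zero_mem _
      | add x y hx hy ihx ihy => exact Submodule.add_mem _ ihx ihy
      | smul a x hx ih =>
        have key : ∀ (h : a • x ∈ J),
            resMk ⟨a • x, h⟩ ∈ Submodule.span k (Set.range v) := by
          intro h
          have hCmem : a - C (coeff 0 a) ∈ m := by
            have hmem2 : a - C (coeff 0 a) ∈ Ideal.span ((X : Fin 3 → Q) '' Set.univ) := by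
              rw [mem_ideal_span_X_image]
              intro d hd
              have hdne : d ≠ 0 := by
                intro h0
                rw [mem_support_iff, h0, coeff_sub, coeff_C, if_pos rfl, sub_self] at hd
                exact hd rfl
              obtain ⟨i, hi⟩ := Finsupp.ne_iff.mp hdne
              exact ⟨i, trivial, by simpa using hi⟩
            rwa [Set.image_univ] at hmem2
          have h1 : (a - C (coeff 0 a)) * x ∈ J := J.mul_mem_left _ hx
          have heq : (⟨a • x, h⟩ : ↥J) =
              (C (coeff 0 a) : Q) • (⟨x, hx⟩ : ↥J) + ⟨(a - C (coeff 0 a)) * x, h1⟩ := by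
            apply Subtype.ext
            show a • x = (C (coeff 0 a) : Q) • x + (a - C (coeff 0 a)) * x
            rw [smul_eq_mul, smul_eq_mul]; ring
          have hsplit : resMk ⟨a • x, h⟩ =
              resMk ((C (coeff 0 a) : Q) • (⟨x, hx⟩ : ↥J)) + resMk ⟨(a - C (coeff 0 a)) * x, h1⟩ := by
            show (Submodule.Quotient.mk (⟨a • x, h⟩ : ↥J) : M) = _
            rw [heq, Submodule.Quotient.mk_add]; rfl
          rw [hsplit]
          apply Submodule.add_mem
          · have hmem3 : (coeff 0 a) • resMk ⟨x, hx⟩ ∈ Submodule.span k (Set.range v) :=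
              Submodule.smul_mem _ _ ih
            rw [hsmul] at hmem3
            exact hmem3
          · have hz : resMk ⟨(a - C (coeff 0 a)) * x, h1⟩ = 0 := by
              show (Submodule.Quotient.mk (⟨(a - C (coeff 0 a)) * x, h1⟩ : ↥J) : M) = 0
              rw [Submodule.Quotient.mk_eq_zero]
              rw [Submodule.mem_smul_top_iff, Ideal.smul_eq_mul]
              exact Ideal.mul_mem_mul hCmem hx
            rw [hz]
            exact Submodule.zero_mem _
        exact key _
    exact hmain p hp
  have b : Module.Basis (Fin r) k (RestrictScalars k Q M) := Module.Basis.mk hind hspan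
  show Module.finrank k (RestrictScalars k Q M) = r
  rw [Module.finrank_eq_card_basis b, Fintype.card_fin]

lemma range4 {A : Type*} (a b c d : A) : Set.range ![a,b,c,d] = {a,b,c,d} := by
  ext x
  constructor
  · rintro ⟨i, rfl⟩
    fin_cases i <;> simp
  · intro hx
    simp only [Set.mem_insert_iff, Set.mem_singleton_iff] at hx
    rcases hx with rfl|rfl|rfl|rfl
    exacts [⟨0, rfl⟩, ⟨1, rfl⟩, ⟨2, rfl⟩, ⟨3, rfl⟩]

lemma range3 {A : Type*} (a b c : A) : Set.range ![a,b,c] = {a,b,c} := by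
  ext x
  constructor
  · rintro ⟨i, rfl⟩
    fin_cases i <;> simp
  · intro hx
    simp only [Set.mem_insert_iff, Set.mem_singleton_iff] at hx
    rcases hx with rfl|rfl|rfl
    exacts [⟨0, rfl⟩, ⟨1, rfl⟩, ⟨2, rfl⟩]

lemma mu_S : mu k (star k (toricIdeal k ![5, 6, 19])) = 4 := by
  rw [star_S]
  have hset : ({X 1 ^ 5, X 0 * X 2, X 1 * X 2, X 2 ^ 2} : Set (MvPolynomial (Fin 3) k)) =
      (fun s => monomial s (1:k)) '' Set.range ![Finsupp.single 1 5,
        Finsupp.single 0 1 + Finsupp.single 2 1,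
        Finsupp.single 1 1 + Finsupp.single 2 1, Finsupp.single 2 2] := by
    rw [range4, Set.image_insert_eq, Set.image_insert_eq, Set.image_insert_eq,
      Set.image_singleton, ← X_pow_eq_monomial, ← X_pow_eq_monomial, ← Xmul k 0 2, ← Xmul k 1 2]
  rw [hset]
  apply mu_monomial_span
  · intro i j hij
    fin_cases i <;> fin_cases j <;> first
      | rfl
      | (exfalso
         have h1 := Finsupp.ext_iff.mp hij 1
         have h2 := Finsupp.ext_iff.mp hij 2
         simp [Finsupp.single_apply] at h1 h2)
  · intro i j l hle
    rw [le3] at hle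
    fin_cases i <;> fin_cases j <;> fin_cases l <;>
      simp [Finsupp.single_apply] at hle <;> omega

lemma mu_S2 : mu k (star k (toricIdeal k ![5, 31, 99])) = 3 := by
  rw [star_S2]
  have hset : ({X 1 ^ 4, X 1 * X 2, X 2 ^ 2} : Set (MvPolynomial (Fin 3) k)) =
      (fun s => monomial s (1:k)) '' Set.range ![Finsupp.single 1 4,
        Finsupp.single 1 1 + Finsupp.single 2 1, Finsupp.single 2 2] := by
    rw [range3, Set.image_insert_eq, Set.image_insert_eq,
      Set.image_singleton, ← X_pow_eq_monomial, ← X_pow_eq_monomial, ← Xmul k 1 2]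
  rw [hset]
  apply mu_monomial_span
  · intro i j hij
    fin_cases i <;> fin_cases j <;> first
      | rfl
      | (exfalso
         have h1 := Finsupp.ext_iff.mp hij 1
         have h2 := Finsupp.ext_iff.mp hij 2
         simp [Finsupp.single_apply] at h1 h2)
  · intro i j l hle
    rw [le3] at hle
    fin_cases i <;> fin_cases j <;> fin_cases l <;>
      simp [Finsupp.single_apply] at hle <;> omega


/-- **(Part of the Proposition in Section 5, via Example 5.3.)** The numerical semigroups
`S = ⟨5,6,19⟩` and `S'' = ⟨5,31,99⟩` lie in the same face of the Kunz cone `C₅`, yet with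
`Q' = k[y, x₁, x₄]` (variables `0 ↦ y, 1 ↦ x₁, 2 ↦ x₄`) the ideals of initial forms are
`I_S^* = (x₁⁵, y x₄, x₁ x₄, x₄²)` and `I_{S''}^* = (x₁⁴, x₁ x₄, x₄²)`; in particular
`μ(I_S^*) = 4` while `μ(I_{S''}^*) = 3`, so `β₁^{Q'}(gr_𝔪 k[S]) ≠ β₁^{Q'}(gr_𝔪 k[S''])`. -/
theorem initial_ideals_differ_on_same_face :
    SameFace (AddSubmonoid.closure {5, 6, 19}) (AddSubmonoid.closure {5, 31, 99}) 5 ∧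
    star k (toricIdeal k ![5, 6, 19]) =
      Ideal.span {X 1 ^ 5, X 0 * X 2, X 1 * X 2, X 2 ^ 2} ∧
    star k (toricIdeal k ![5, 31, 99]) =
      Ideal.span {X 1 ^ 4, X 1 * X 2, X 2 ^ 2} ∧
    mu k (star k (toricIdeal k ![5, 6, 19])) = 4 ∧
    mu k (star k (toricIdeal k ![5, 31, 99])) = 3 :=
  ⟨sameFace_part, star_S k, star_S2 k, mu_S k, mu_S2 k⟩
end
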